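/- Let μ = μ₁ ∗ μ₂ be the convolution of two compactly supported Borel probability measures on ℝⁿ, neither a Dirac measure. If Λ is an orthogonal set of exponentials for μ₁, then Λ is an orthogonal set for μ, but Λ cannot be a spectrum of μ (i.e., the exponentials indexed by Λ cannot form an orthonormal basis of L²(μ)). -/

import Mathlib

open MeasureTheory

/-- The Fourier transform of a measure on `ℝⁿ`. -/
noncomputable def measureFT {n : ℕ} (μ : Measure (EuclideanSpace ℝ (Fin n)))
    (ξ : EuclideanSpace ℝ (Fin n)) : ℂ :=
  ∫ x, Complex.exp (2 * (Real.pi : ℂ) * Complex.I * ((inner ℝ x ξ : ℝ) : ℂ)) ∂μ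

/-- `Λ` is an orthogonal set of exponentials for `μ`. -/
def IsOrthogonalSet {n : ℕ} (μ : Measure (EuclideanSpace ℝ (Fin n)))
    (Λ : Set (EuclideanSpace ℝ (Fin n))) : Prop :=
  ∀ l1 ∈ Λ, ∀ l2 ∈ Λ, l1 ≠ l2 → measureFT μ (l1 - l2) = 0

/-- `Λ` is a spectrum of `μ`: the exponentials `e^{2πi⟨λ,·⟩}`, `λ ∈ Λ`, are mutually
orthogonal in `L²(μ)` (each has norm one since `μ` is a probability measure) and they are
total: any `f ∈ L²(μ)` orthogonal to all of them vanishes `μ`-a.e. This is exactly the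
statement that they form an orthonormal basis of `L²(μ)`. -/
def IsSpectrum {n : ℕ} (μ : Measure (EuclideanSpace ℝ (Fin n)))
    (Λ : Set (EuclideanSpace ℝ (Fin n))) : Prop :=
  IsOrthogonalSet μ Λ ∧
    ∀ f : EuclideanSpace ℝ (Fin n) → ℂ, MemLp f 2 μ →
      (∀ l ∈ Λ, (∫ x, f x * (starRingEnd ℂ)
          (Complex.exp (2 * (Real.pi : ℂ) * Complex.I * ((inner ℝ x l : ℝ) : ℂ))) ∂μ) = 0) →
      f =ᵐ[μ] 0

/-! ### Auxiliary material -/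

namespace SpectrumAux

open Complex Set Filter

abbrev Eu (n : ℕ) := EuclideanSpace ℝ (Fin n)

variable {n : ℕ}

noncomputable def eFun (ξ x : Eu n) : ℂ :=
  Complex.exp (2 * (Real.pi : ℂ) * Complex.I * ((inner ℝ x ξ : ℝ) : ℂ))

lemma measureFT_eq (ν : Measure (Eu n)) (ξ : Eu n) : measureFT ν ξ = ∫ x, eFun ξ x ∂ν := rfl

lemma eFun_eq (ξ x : Eu n) :
    eFun ξ x = Complex.exp (((2 * Real.pi * (inner ℝ x ξ : ℝ) : ℝ) : ℂ) * Complex.I) := by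
  unfold eFun; congr 1; push_cast; ring

lemma norm_eFun (ξ x : Eu n) : ‖eFun ξ x‖ = 1 := by
  rw [eFun_eq, Complex.norm_exp_ofReal_mul_I]

lemma eFun_continuous (ξ : Eu n) : Continuous (eFun ξ) := by
  unfold eFun
  exact Complex.continuous_exp.comp
    (continuous_const.mul (Complex.continuous_ofReal.comp (continuous_id.inner continuous_const)))

lemma eFun_continuous_param (x : Eu n) : Continuous fun ξ : Eu n => eFun ξ x := by
  unfold eFun
  exact Complex.continuous_exp.comp
    (continuous_const.mul (Complex.continuous_ofReal.comp (continuous_const.inner continuous_id)))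

lemma conj_eFun (ξ x : Eu n) : (starRingEnd ℂ) (eFun ξ x) = eFun (-ξ) x := by
  rw [eFun_eq, eFun_eq, ← Complex.exp_conj]
  congr 1
  rw [map_mul, Complex.conj_ofReal, Complex.conj_I, inner_neg_right]
  push_cast; ring

lemma eFun_add_right (a b x : Eu n) : eFun (a + b) x = eFun a x * eFun b x := by
  unfold eFun
  rw [← Complex.exp_add]
  congr 1
  rw [inner_add_right]
  push_cast; ring

lemma eFun_add_left (ξ x y : Eu n) : eFun ξ (x + y) = eFun ξ x * eFun ξ y := by
  unfold eFun
  rw [← Complex.exp_add]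
  congr 1
  rw [inner_add_left]
  push_cast; ring

variable (ν : Measure (Eu n)) [IsProbabilityMeasure ν]

lemma eFun_memLp (ξ : Eu n) : MemLp (eFun ξ) 2 ν :=
  MemLp.of_bound (eFun_continuous ξ).aestronglyMeasurable 1
    (Filter.Eventually.of_forall fun x => (norm_eFun ξ x).le)

lemma eFun_integrable (ξ : Eu n) : Integrable (eFun ξ) ν :=
  (eFun_memLp ν ξ).integrable one_le_two

lemma measureFT_zero : measureFT ν (0 : Eu n) = 1 := by
  rw [measureFT_eq]
  have : ∀ x : Eu n, eFun (0 : Eu n) x = 1 := by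
    intro x; unfold eFun; simp
  simp [this, measure_univ]

lemma norm_measureFT_le_one (ξ : Eu n) : ‖measureFT ν ξ‖ ≤ 1 := by
  rw [measureFT_eq]
  calc ‖∫ x, eFun ξ x ∂ν‖ ≤ ∫ x, ‖eFun ξ x‖ ∂ν := norm_integral_le_integral_norm _
  _ = 1 := by
    simp only [norm_eFun, integral_const, measure_univ, ENNReal.toReal_one, probReal_univ, smul_eq_mul, mul_one,
      one_smul]

lemma measureFT_neg (ξ : Eu n) : measureFT ν (-ξ) = (starRingEnd ℂ) (measureFT ν ξ) := by
  rw [measureFT_eq, measureFT_eq, ← integral_conj]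
  exact integral_congr_ae (Filter.Eventually.of_forall fun x => (conj_eFun ξ x).symm)

noncomputable def eLp (ξ : Eu n) : Lp ℂ 2 ν := (eFun_memLp ν ξ).toLp _

lemma inner_eLp (a b : Eu n) : (inner ℂ (eLp ν a) (eLp ν b) : ℂ) = measureFT ν (b - a) := by
  rw [L2.inner_def, measureFT_eq]
  apply integral_congr_ae
  filter_upwards [(eFun_memLp ν a).coeFn_toLp, (eFun_memLp ν b).coeFn_toLp] with x hxa hxb
  simp only [eLp]
  rw [RCLike.inner_apply', hxa, hxb, conj_eFun, ← eFun_add_right, neg_add_eq_sub]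

lemma inner_eLp_self (ξ : Eu n) : (inner ℂ (eLp ν ξ) (eLp ν ξ) : ℂ) = 1 := by
  rw [inner_eLp, sub_self, measureFT_zero]

lemma norm_eLp (ξ : Eu n) : ‖eLp ν ξ‖ = 1 := by
  rw [@norm_eq_sqrt_re_inner ℂ, inner_eLp_self]
  simp

lemma orthonormal_eLp (Λ : Set (Eu n)) (horth : IsOrthogonalSet ν Λ) :
    Orthonormal ℂ (fun l : Λ => eLp ν (l : Eu n)) := by
  classical
  rw [orthonormal_iff_ite]
  intro i j
  rw [inner_eLp]
  by_cases h : i = j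
  · rw [if_pos h, h, sub_self, measureFT_zero]
  · rw [if_neg h]
    exact horth _ j.2 _ i.2 fun hc => h (Subtype.ext hc.symm)

lemma bessel (Λ : Set (Eu n)) (horth : IsOrthogonalSet ν Λ) (ξ : Eu n) :
    (Summable fun l : Λ => ‖measureFT ν (ξ - (l : Eu n))‖ ^ 2) ∧
      ∑' l : Λ, ‖measureFT ν (ξ - (l : Eu n))‖ ^ 2 ≤ 1 := by
  have hon := orthonormal_eLp ν Λ horth
  have hfun : (fun l : Λ => ‖(inner ℂ (eLp ν (l : Eu n)) (eLp ν ξ) : ℂ)‖ ^ 2)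
      = fun l : Λ => ‖measureFT ν (ξ - (l : Eu n))‖ ^ 2 := by
    funext l; rw [inner_eLp]
  have hsum := Orthonormal.inner_products_summable (eLp ν ξ) hon
  have hle := Orthonormal.tsum_inner_products_le (x := eLp ν ξ) hon
  rw [hfun] at hsum hle
  rw [norm_eLp, one_pow] at hle
  exact ⟨hsum, hle⟩

end SpectrumAux

namespace SpectrumAux
open MeasureTheory Complex Set Filter

variable {n : ℕ} (μ : Measure (Eu n)) [IsProbabilityMeasure μ]

set_option maxHeartbeats 1000000 in
lemma parseval (Λ : Set (Eu n)) (hspec : IsSpectrum μ Λ) (ξ : Eu n) :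
    HasSum (fun l : Λ => ‖measureFT μ (ξ - (l : Eu n))‖ ^ 2) 1 := by
  set v : Λ → Lp ℂ 2 μ := fun l => eLp μ (l : Eu n) with hv
  have hon : Orthonormal ℂ v := orthonormal_eLp μ Λ hspec.1
  have hbot : (Submodule.span ℂ (Set.range v))ᗮ = ⊥ := by
    rw [Submodule.eq_bot_iff]
    intro y hy
    have hy' : ∀ l : Λ, (inner ℂ (v l) y : ℂ) = 0 := fun l =>
      (Submodule.mem_orthogonal _ y).mp hy (v l) (Submodule.subset_span (Set.mem_range_self l))
    have hf : ∀ l ∈ Λ, (∫ x, (y : Eu n → ℂ) x * (starRingEnd ℂ)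
        (Complex.exp (2 * (Real.pi : ℂ) * Complex.I * ((inner ℝ x l : ℝ) : ℂ))) ∂μ) = 0 := by
      intro l hl
      have h0 := hy' ⟨l, hl⟩
      rw [L2.inner_def] at h0
      rw [← h0]
      apply integral_congr_ae
      filter_upwards [(eFun_memLp μ l).coeFn_toLp] with x hx
      simp only [hv, eLp]
      rw [RCLike.inner_apply']
      have hx' : ((MemLp.toLp (eFun l) (eFun_memLp μ l) : Lp ℂ 2 μ) : Eu n → ℂ) x = eFun l x := hx
      rw [hx']
      show (y : Eu n → ℂ) x * (starRingEnd ℂ) (eFun l x) = _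
      ring
    have hzero : (y : Eu n → ℂ) =ᵐ[μ] 0 := hspec.2 _ (Lp.memLp y) hf
    exact Lp.ext (hzero.trans (Lp.coeFn_zero ℂ 2 μ).symm)
  let b : HilbertBasis Λ ℂ (Lp ℂ 2 μ) :=
    HilbertBasis.mk hon ((Submodule.topologicalClosure_eq_top_iff.mpr hbot).ge)
  have hpar := b.tsum_inner_mul_inner (eLp μ ξ) (eLp μ ξ)
  have hb : ∀ i : Λ, (b i : Lp ℂ 2 μ) = v i := fun i => congrFun (HilbertBasis.coe_mk hon _) i
  have hterm : ∀ i : Λ, (inner ℂ (eLp μ ξ) (b i) : ℂ) * (inner ℂ (b i) (eLp μ ξ) : ℂ)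
      = ((‖measureFT μ (ξ - (i : Eu n))‖ ^ 2 : ℝ) : ℂ) := by
    intro i
    rw [hb i]
    have h1 : (inner ℂ (v i) (eLp μ ξ) : ℂ) = measureFT μ (ξ - (i : Eu n)) := inner_eLp μ _ _
    calc (inner ℂ (eLp μ ξ) (v i) : ℂ) * (inner ℂ (v i) (eLp μ ξ) : ℂ)
        = (starRingEnd ℂ) (inner ℂ (v i) (eLp μ ξ) : ℂ) * (inner ℂ (v i) (eLp μ ξ) : ℂ) := by
          rw [inner_conj_symm]
      _ = ((‖measureFT μ (ξ - (i : Eu n))‖ ^ 2 : ℝ) : ℂ) := by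
          rw [h1, Complex.conj_mul']
          norm_cast
  rw [inner_eLp_self] at hpar
  simp_rw [hterm] at hpar
  have hsum : Summable fun i : Λ => ‖measureFT μ (ξ - (i : Eu n))‖ ^ 2 := by
    have hs := Orthonormal.inner_products_summable (eLp μ ξ) hon
    have hfun : (fun l : Λ => ‖(inner ℂ (v l) (eLp μ ξ) : ℂ)‖ ^ 2)
        = fun l : Λ => ‖measureFT μ (ξ - (l : Eu n))‖ ^ 2 := by
      funext l; rw [inner_eLp]
    rwa [hfun] at hs
  have hC := (hsum.hasSum.mapL Complex.ofRealCLM).tsum_eq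
  simp only [Complex.ofRealCLM_apply] at hC
  have h1 : ((∑' i : Λ, ‖measureFT μ (ξ - (i : Eu n))‖ ^ 2 : ℝ) : ℂ) = 1 := hC.symm.trans hpar
  have htsum : ∑' i : Λ, ‖measureFT μ (ξ - (i : Eu n))‖ ^ 2 = 1 := by exact_mod_cast h1
  exact htsum ▸ hsum.hasSum

end SpectrumAux

namespace SpectrumAux
open MeasureTheory Complex Set Filter

variable {n : ℕ}

lemma measureFT_conv (μ₁ μ₂ : Measure (Eu n)) [IsProbabilityMeasure μ₁]
    [IsProbabilityMeasure μ₂] (ξ : Eu n) :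
    measureFT (Measure.map (fun p : Eu n × Eu n => p.1 + p.2) (μ₁.prod μ₂)) ξ
      = measureFT μ₁ ξ * measureFT μ₂ ξ := by
  rw [measureFT_eq, integral_map (by fun_prop) (eFun_continuous ξ).aestronglyMeasurable]
  rw [measureFT_eq, measureFT_eq, ← integral_prod_mul]
  exact integral_congr_ae (Filter.Eventually.of_forall fun p => eFun_add_left ξ p.1 p.2)

variable (ν : Measure (Eu n)) [IsProbabilityMeasure ν]

lemma continuous_measureFT : Continuous (measureFT ν) := by
  have : Continuous fun ξ : Eu n => ∫ x, eFun ξ x ∂ν := by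
    apply continuous_of_dominated (bound := fun _ => (1 : ℝ))
    · exact fun ξ => (eFun_continuous ξ).aestronglyMeasurable
    · exact fun ξ => Filter.Eventually.of_forall fun x => (norm_eFun ξ x).le
    · exact integrable_const 1
    · exact Filter.Eventually.of_forall fun x => eFun_continuous_param x
  exact this

lemma eFun_ae_const (η : Eu n) (h : ‖measureFT ν η‖ = 1) :
    ∀ᵐ x ∂ν, eFun η x = measureFT ν η := by
  set c := measureFT ν η with hc
  have hcnorm : ‖c‖ = 1 := h
  have hcne : (starRingEnd ℂ) c ≠ 0 := by
    simp only [ne_eq, map_eq_zero]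
    intro h0; rw [h0] at hcnorm; simp at hcnorm
  have hint : Integrable (eFun η) ν := eFun_integrable ν η
  have hint1 : Integrable (fun x => (starRingEnd ℂ) c * eFun η x) ν := hint.const_mul _
  have hintre : Integrable (fun x => ((starRingEnd ℂ) c * eFun η x).re) ν :=
    Complex.reCLM.integrable_comp hint1
  have hint2 : Integrable (fun x => 1 - ((starRingEnd ℂ) c * eFun η x).re) ν :=
    (integrable_const 1).sub hintre
  have hnormcu : ∀ x, ‖(starRingEnd ℂ) c * eFun η x‖ = 1 := by
    intro x
    rw [norm_mul, norm_eFun, RCLike.norm_conj, hcnorm, one_mul]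
  have hnonneg : ∀ x : Eu n, 0 ≤ 1 - ((starRingEnd ℂ) c * eFun η x).re := by
    intro x
    have h1 := Complex.re_le_norm ((starRingEnd ℂ) c * eFun η x)
    rw [hnormcu x] at h1
    linarith
  have hcc : (starRingEnd ℂ) c * c = 1 := by
    rw [Complex.conj_mul']
    rw [hcnorm]
    norm_num
  have hzero : ∫ x, (1 - ((starRingEnd ℂ) c * eFun η x).re) ∂ν = 0 := by
    rw [integral_sub (integrable_const 1) hintre, integral_const, probReal_univ]
    have hre : ∫ x, ((starRingEnd ℂ) c * eFun η x).re ∂ν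
        = (∫ x, (starRingEnd ℂ) c * eFun η x ∂ν).re := by
      have := Complex.reCLM.integral_comp_comm hint1
      simpa using this
    rw [hre, integral_const_mul, ← measureFT_eq, ← hc, hcc]
    simp
  have hae := (integral_eq_zero_iff_of_nonneg hnonneg hint2).mp hzero
  filter_upwards [hae] with x hx
  have h1 : ((starRingEnd ℂ) c * eFun η x).re = 1 := by
    have : (1 : ℝ) - ((starRingEnd ℂ) c * eFun η x).re = 0 := hx
    linarith
  have heq1 : (starRingEnd ℂ) c * eFun η x = 1 := by
    have habs : ‖(starRingEnd ℂ) c * eFun η x‖ = 1 := by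
      exact hnormcu x
    have hns := Complex.sq_norm ((starRingEnd ℂ) c * eFun η x)
    rw [habs] at hns
    have him : ((starRingEnd ℂ) c * eFun η x).im = 0 := by
      have := Complex.normSq_apply ((starRingEnd ℂ) c * eFun η x)
      nlinarith [this, hns]
    apply Complex.ext <;> simp [h1, him]
  have : (starRingEnd ℂ) c * eFun η x = (starRingEnd ℂ) c * c := by rw [heq1, hcc]
  exact mul_left_cancel₀ hcne this

lemma norm_ft_add_eq_one {a b : Eu n} (ha : ‖measureFT ν a‖ = 1) (hb : ‖measureFT ν b‖ = 1) :
    ‖measureFT ν (a + b)‖ = 1 := by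
  have h1 := eFun_ae_const ν a ha
  have h2 := eFun_ae_const ν b hb
  have hval : measureFT ν (a + b) = measureFT ν a * measureFT ν b := by
    rw [measureFT_eq]
    rw [integral_congr_ae (g := fun _ => measureFT ν a * measureFT ν b)
      (by filter_upwards [h1, h2] with x hx1 hx2; rw [eFun_add_right, hx1, hx2])]
    simp [measure_univ]
  rw [hval, norm_mul, ha, hb, one_mul]

lemma norm_ft_neg {a : Eu n} (ha : ‖measureFT ν a‖ = 1) : ‖measureFT ν (-a)‖ = 1 := by
  rw [measureFT_neg, RCLike.norm_conj]; exact ha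

lemma norm_ft_zero : ‖measureFT ν (0 : Eu n)‖ = 1 := by
  rw [measureFT_zero]; simp

end SpectrumAux

namespace SpectrumAux
open MeasureTheory Complex Set Filter

variable {n : ℕ}

lemma coord_eq_of_exp {x y : ℝ} (h : ∀ q : ℚ, ∃ m : ℤ, (q : ℝ) * (x - y) = m) : x = y := by
  by_contra hne
  have hd : x - y ≠ 0 := sub_ne_zero.mpr hne
  set d := x - y with hdd
  set N := ⌈|d|⌉₊ with hN
  obtain ⟨m, hm⟩ := h (((N : ℚ) + 1)⁻¹)
  have hq : ((((N : ℚ) + 1)⁻¹ : ℚ) : ℝ) = ((N : ℝ) + 1)⁻¹ := by push_cast; norm_num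
  rw [hq] at hm
  have hNpos : (0 : ℝ) < (N : ℝ) + 1 := by positivity
  have habs : |(m : ℝ)| < 1 := by
    rw [← hm, abs_mul, abs_inv, abs_of_pos hNpos]
    have h1 : |d| ≤ (N : ℝ) := Nat.le_ceil |d|
    calc ((N : ℝ) + 1)⁻¹ * |d| ≤ ((N : ℝ) + 1)⁻¹ * (N : ℝ) := by
          exact mul_le_mul_of_nonneg_left h1 (by positivity)
      _ < 1 := by
          rw [inv_mul_lt_iff₀ hNpos]; linarith
  have hm0 : m = 0 := by
    have h2 : |m| < 1 := by exact_mod_cast habs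
    have h3 := abs_lt.mp h2
    omega
  rw [hm0] at hm
  simp only [Int.cast_zero] at hm
  rcases mul_eq_zero.mp hm with h0 | h0
  · exact absurd h0 (by positivity)
  · exact hd h0

lemma rat_int_of_eFun_eq {j : Fin n} {q : ℚ} {x y : Eu n}
    (h : eFun (EuclideanSpace.single j (q : ℝ)) x = eFun (EuclideanSpace.single j (q : ℝ)) y) :
    ∃ m : ℤ, (q : ℝ) * (x j - y j) = m := by
  unfold eFun at h
  rw [Complex.exp_eq_exp_iff_exp_sub_eq_one, Complex.exp_eq_one_iff] at h
  obtain ⟨m, hm⟩ := h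
  refine ⟨m, ?_⟩
  have hinner : ∀ z : Eu n, (inner ℝ z (EuclideanSpace.single j (q : ℝ)) : ℝ) = (q : ℝ) * z j := by
    intro z
    rw [EuclideanSpace.inner_single_right]
    simp [starRingEnd_apply]
  rw [hinner x, hinner y] at hm
  have h2 : (2 * (Real.pi : ℂ) * Complex.I) ≠ 0 := by
    simp [Real.pi_ne_zero, Complex.I_ne_zero]
  have h3 : (2 * (Real.pi : ℂ) * Complex.I) * (((q : ℝ) * (x j - y j) : ℝ) : ℂ)
      = (2 * (Real.pi : ℂ) * Complex.I) * (m : ℂ) := by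
    push_cast at hm ⊢
    linear_combination hm
  have h4 := mul_left_cancel₀ h2 h3
  exact_mod_cast h4

variable (ν : Measure (Eu n)) [IsProbabilityMeasure ν]

lemma exists_dirac_of_norm_ft (h : ∀ η : Eu n, ‖measureFT ν η‖ = 1) :
    ∃ x₀, ν = Measure.dirac x₀ := by
  classical
  have hae : ∀ᵐ x ∂ν, ∀ p : ℚ × Fin n,
      eFun (EuclideanSpace.single p.2 ((p.1 : ℝ))) x
        = measureFT ν (EuclideanSpace.single p.2 ((p.1 : ℝ))) := by
    rw [ae_all_iff]
    exact fun p => eFun_ae_const ν _ (h _)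
  set A : Set (Eu n) := {x | ∀ p : ℚ × Fin n,
      eFun (EuclideanSpace.single p.2 ((p.1 : ℝ))) x
        = measureFT ν (EuclideanSpace.single p.2 ((p.1 : ℝ)))} with hA
  have hAc : ν Aᶜ = 0 := by
    rw [ae_iff] at hae
    convert hae using 2
    rfl

  have hsub : ∀ x ∈ A, ∀ y ∈ A, x = y := by
    intro x hx y hy
    ext j
    apply coord_eq_of_exp
    intro q
    exact rat_int_of_eFun_eq ((hx (q, j)).trans (hy (q, j)).symm)
  have hAne : A.Nonempty := by
    by_contra hne
    rw [Set.not_nonempty_iff_eq_empty] at hne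
    rw [hne, Set.compl_empty, measure_univ] at hAc
    exact one_ne_zero hAc
  obtain ⟨x₀, hx₀⟩ := hAne
  refine ⟨x₀, ?_⟩
  have hx₀c : ν {x₀}ᶜ = 0 := by
    refine measure_mono_null ?_ hAc
    intro y hy hyA
    exact hy (hsub y hyA x₀ hx₀)
  ext s hs
  rw [Measure.dirac_apply' _ hs]
  by_cases hxs : x₀ ∈ s
  · rw [Set.indicator_of_mem hxs]
    have hsc : ν sᶜ = 0 := by
      refine measure_mono_null ?_ hx₀c
      intro y hy h0
      rw [Set.mem_singleton_iff] at h0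
      exact hy (h0 ▸ hxs)
    rw [(prob_compl_eq_zero_iff hs).mp hsc]; rfl
  · rw [Set.indicator_of_notMem hxs]
    refine measure_mono_null ?_ hx₀c
    intro y hy h0
    rw [Set.mem_singleton_iff] at h0
    exact hxs (h0 ▸ hy)

end SpectrumAux

namespace SpectrumAux
open MeasureTheory Complex Set Filter Pointwise

variable {n : ℕ}

lemma subgroup_eq_univ (E : Set (Eu n)) (hmeas : MeasurableSet E) (hpos : volume E ≠ 0)
    (h0 : (0 : Eu n) ∈ E) (hadd : ∀ a ∈ E, ∀ b ∈ E, a + b ∈ E)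
    (hneg : ∀ a ∈ E, -a ∈ E) : E = Set.univ := by
  have hsub : E - E ⊆ E := by
    rintro z hz
    rw [Set.mem_sub] at hz
    obtain ⟨a, ha, b, hb, rfl⟩ := hz
    rw [sub_eq_add_neg]
    exact hadd a ha (-b) (hneg b hb)
  have hnhds : E ∈ nhds (0 : Eu n) :=
    Filter.mem_of_superset
      (Measure.sub_mem_nhds_zero_of_addHaar_pos volume E hmeas (pos_iff_ne_zero.mpr hpos)) hsub
  have hnsmul : ∀ (k : ℕ) (a : Eu n), a ∈ E → (k : ℝ) • a ∈ E := by
    intro k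
    induction k with
    | zero => intro a _; simpa using h0
    | succ k ih =>
      intro a ha
      have hr : ((k + 1 : ℕ) : ℝ) • a = (k : ℝ) • a + a := by
        push_cast
        rw [add_smul, one_smul]
      rw [hr]
      exact hadd _ (ih a ha) _ ha
  ext x
  simp only [Set.mem_univ, iff_true]
  have htend : Filter.Tendsto (fun m : ℕ => (m : ℝ)⁻¹ • x) Filter.atTop (nhds 0) := by
    have h1 := (tendsto_inv_atTop_nhds_zero_nat (𝕜 := ℝ)).smul_const x
    simpa using h1
  have hev := htend.eventually_mem hnhds
  obtain ⟨m, hm1, hm2⟩ := (hev.and (eventually_ge_atTop 1)).exists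
  have hmne : ((m : ℕ) : ℝ) ≠ 0 := Nat.cast_ne_zero.mpr (by omega)
  have hx : ((m : ℕ) : ℝ) • ((m : ℝ)⁻¹ • x) = x := by
    rw [smul_smul, mul_inv_cancel₀ hmne, one_smul]
  rw [← hx]
  exact hnsmul m _ hm1

lemma univ_null_of_cover (Λ : Set (Eu n)) (hΛ : Λ.Countable) (E : Set (Eu n))
    (hE : volume E = 0) (hcov : ∀ ξ : Eu n, ∃ l ∈ Λ, ξ - l ∈ E) : False := by
  have := hΛ.to_subtype
  have hcov' : (Set.univ : Set (Eu n)) ⊆ ⋃ l : Λ, (fun ξ => ξ - (l : Eu n)) ⁻¹' E := by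
    intro ξ _
    obtain ⟨l, hl, hle⟩ := hcov ξ
    exact Set.mem_iUnion.mpr ⟨⟨l, hl⟩, hle⟩
  have hnull : volume (⋃ l : Λ, (fun ξ => ξ - (l : Eu n)) ⁻¹' E) = 0 := by
    refine measure_iUnion_null fun l => ?_
    have heq : (fun ξ : Eu n => ξ - (l : Eu n)) = fun ξ => (-(l : Eu n)) + ξ := by
      funext ξ; rw [sub_eq_neg_add]
    rw [heq, measure_preimage_add]
    exact hE
  have huniv : volume (Set.univ : Set (Eu n)) = 0 := measure_mono_null hcov' hnull
  exact IsOpen.measure_ne_zero volume isOpen_univ Set.univ_nonempty huniv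

set_option maxHeartbeats 800000 in
lemma key_norm_one (μ₁ μ₂ : Measure (Eu n)) [IsProbabilityMeasure μ₁] [IsProbabilityMeasure μ₂]
    (Λ : Set (Eu n)) (horth : IsOrthogonalSet μ₁ Λ)
    (hspec : IsSpectrum (Measure.map (fun p : Eu n × Eu n => p.1 + p.2) (μ₁.prod μ₂)) Λ)
    (ξ : Eu n) : ∃ l ∈ Λ, ‖measureFT μ₂ (ξ - l)‖ = 1 := by
  haveI : IsProbabilityMeasure
      (Measure.map (fun p : Eu n × Eu n => p.1 + p.2) (μ₁.prod μ₂)) :=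
    Measure.isProbabilityMeasure_map (by fun_prop)
  have hpar := parseval _ Λ hspec ξ
  have hbes := bessel μ₁ Λ horth ξ
  have hconv : ∀ l : Λ,
      measureFT (Measure.map (fun p : Eu n × Eu n => p.1 + p.2) (μ₁.prod μ₂)) (ξ - (l : Eu n))
        = measureFT μ₁ (ξ - (l : Eu n)) * measureFT μ₂ (ξ - (l : Eu n)) :=
    fun l => measureFT_conv μ₁ μ₂ _
  have hfg : ∀ l : Λ,
      ‖measureFT (Measure.map (fun p : Eu n × Eu n => p.1 + p.2) (μ₁.prod μ₂))
        (ξ - (l : Eu n))‖ ^ 2 ≤ ‖measureFT μ₁ (ξ - (l : Eu n))‖ ^ 2 := by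
    intro l
    rw [hconv l, norm_mul, mul_pow]
    have h2 := norm_measureFT_le_one μ₂ (ξ - (l : Eu n))
    have ha := norm_nonneg (measureFT μ₁ (ξ - (l : Eu n)))
    have hb := norm_nonneg (measureFT μ₂ (ξ - (l : Eu n)))
    have hb2 : ‖measureFT μ₂ (ξ - (l : Eu n))‖ ^ 2 ≤ 1 := by nlinarith
    calc ‖measureFT μ₁ (ξ - (l : Eu n))‖ ^ 2 * ‖measureFT μ₂ (ξ - (l : Eu n))‖ ^ 2
        ≤ ‖measureFT μ₁ (ξ - (l : Eu n))‖ ^ 2 * 1 :=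
          mul_le_mul_of_nonneg_left hb2 (sq_nonneg _)
      _ = ‖measureFT μ₁ (ξ - (l : Eu n))‖ ^ 2 := mul_one _
  have heq : ∀ l : Λ,
      ‖measureFT (Measure.map (fun p : Eu n × Eu n => p.1 + p.2) (μ₁.prod μ₂))
        (ξ - (l : Eu n))‖ ^ 2 = ‖measureFT μ₁ (ξ - (l : Eu n))‖ ^ 2 := by
    intro l
    by_contra hne
    have hlt := lt_of_le_of_ne (hfg l) hne
    have hstrict := Summable.tsum_lt_tsum hfg hlt hpar.summable hbes.1
    rw [hpar.tsum_eq] at hstrict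
    linarith [hbes.2]
  have hex : ∃ l : Λ,
      ‖measureFT (Measure.map (fun p : Eu n × Eu n => p.1 + p.2) (μ₁.prod μ₂))
        (ξ - (l : Eu n))‖ ^ 2 ≠ 0 := by
    by_contra hall
    push_neg at hall
    have hzero : HasSum (fun l : Λ =>
        ‖measureFT (Measure.map (fun p : Eu n × Eu n => p.1 + p.2) (μ₁.prod μ₂))
          (ξ - (l : Eu n))‖ ^ 2) 0 := by
      have : (fun l : Λ =>
          ‖measureFT (Measure.map (fun p : Eu n × Eu n => p.1 + p.2) (μ₁.prod μ₂))
            (ξ - (l : Eu n))‖ ^ 2) = fun _ => 0 := funext hall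
      rw [this]
      exact hasSum_zero
    exact one_ne_zero (hpar.unique hzero)
  obtain ⟨l, hl⟩ := hex
  refine ⟨l, l.2, ?_⟩
  have hfl : ‖measureFT (Measure.map (fun p : Eu n × Eu n => p.1 + p.2) (μ₁.prod μ₂))
      (ξ - (l : Eu n))‖ ^ 2
      = ‖measureFT μ₁ (ξ - (l : Eu n))‖ ^ 2 * ‖measureFT μ₂ (ξ - (l : Eu n))‖ ^ 2 := by
    rw [hconv l, norm_mul]; ring
  have hgne : ‖measureFT μ₁ (ξ - (l : Eu n))‖ ^ 2 ≠ 0 := by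
    intro h0
    rw [hfl, h0, zero_mul] at hl
    exact hl rfl
  have hsq : ‖measureFT μ₂ (ξ - (l : Eu n))‖ ^ 2 = 1 := by
    have h1 := heq l
    rw [hfl] at h1
    have h2 : ‖measureFT μ₁ (ξ - (l : Eu n))‖ ^ 2 * ‖measureFT μ₂ (ξ - (l : Eu n))‖ ^ 2
        = ‖measureFT μ₁ (ξ - (l : Eu n))‖ ^ 2 * 1 := by rw [mul_one]; exact h1
    exact mul_left_cancel₀ hgne h2
  nlinarith [norm_nonneg (measureFT μ₂ (ξ - (l : Eu n)))]

end SpectrumAux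

open SpectrumAux in
/-- if `μ = μ₁ ∗ μ₂` is the convolution of two compactly supported Borel
probability measures, neither a Dirac measure, and `Λ` is an orthogonal set for `μ₁`,
then `Λ` is an orthogonal set for `μ` but not a spectrum of `μ`. -/
theorem orthSet_of_conv_not_spectrum {n : ℕ}
    (μ₁ μ₂ μ : Measure (EuclideanSpace ℝ (Fin n)))
    [IsProbabilityMeasure μ₁] [IsProbabilityMeasure μ₂]
    (K₁ K₂ : Set (EuclideanSpace ℝ (Fin n))) (hK₁ : IsCompact K₁) (hK₂ : IsCompact K₂)
    (hsupp₁ : μ₁ K₁ᶜ = 0) (hsupp₂ : μ₂ K₂ᶜ = 0)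
    (hdirac₁ : ∀ x, μ₁ ≠ Measure.dirac x) (hdirac₂ : ∀ x, μ₂ ≠ Measure.dirac x)
    (hconv : μ = Measure.map (fun p : EuclideanSpace ℝ (Fin n) × EuclideanSpace ℝ (Fin n) =>
      p.1 + p.2) (μ₁.prod μ₂))
    (Λ : Set (EuclideanSpace ℝ (Fin n))) (hΛ : Λ.Countable)
    (horth : IsOrthogonalSet μ₁ Λ) :
    IsOrthogonalSet μ Λ ∧ ¬ IsSpectrum μ Λ := by
  subst hconv
  constructor
  · intro l1 h1 l2 h2 hne
    rw [measureFT_conv, horth l1 h1 l2 h2 hne, zero_mul]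
  · intro hspec
    classical
    set E : Set (Eu n) := {η | ‖measureFT μ₂ η‖ = 1} with hE
    have hkey : ∀ ξ : Eu n, ∃ l ∈ Λ, ξ - l ∈ E := fun ξ =>
      key_norm_one μ₁ μ₂ Λ horth hspec ξ
    have hEmeas : MeasurableSet E := by
      have hcl : IsClosed E := by
        have : E = (fun η => ‖measureFT μ₂ η‖) ⁻¹' {1} := rfl
        rw [this]
        exact IsClosed.preimage (continuous_measureFT μ₂).norm isClosed_singleton
      exact hcl.measurableSet
    by_cases hvol : volume E = 0
    · exact univ_null_of_cover Λ hΛ E hvol hkey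
    · have hEuniv : E = Set.univ :=
        subgroup_eq_univ E hEmeas hvol (norm_ft_zero μ₂)
          (fun a ha b hb => norm_ft_add_eq_one μ₂ ha hb) (fun a ha => norm_ft_neg μ₂ ha)
      have hall : ∀ η : Eu n, ‖measureFT μ₂ η‖ = 1 := by
        intro η
        have : η ∈ E := hEuniv ▸ Set.mem_univ η
        exact this
      obtain ⟨x₀, hx₀⟩ := exists_dirac_of_norm_ft μ₂ hall
      exact hdirac₂ x₀ hx₀
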